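/- Let D be a triangulated category with a bounded co-t-structure (D_{\ge 0}, D_{\le 0}) and coheart S. Then D_{\ge 0} equals the smallest full additive subcategory of D containing all S[-k] for k \ge 0 and closed under extensions and direct summands, and D_{\le 0} equals the smallest full additive subcategory containing all S[k] for k \ge 0 and closed under extensions and direct summands. -/

import Mathlib

open CategoryTheory Limits Pretriangulated

/-- A co-`t`-structure on a triangulated category: a pair of full additive subcategories
(given by iso-closed predicates) closed under direct summands, with the shift, orthogonality
and decomposition-triangle axioms. -/
structure CoTStructure (C : Type*) [Category C] [Preadditive C] [HasZeroObject C]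
    [HasShift C ℤ] [∀ n : ℤ, (shiftFunctor C n).Additive] [Pretriangulated C] where
  ge : C → Prop
  le : C → Prop
  ge_iso : ∀ {X Y : C}, (X ≅ Y) → ge X → ge Y
  le_iso : ∀ {X Y : C}, (X ≅ Y) → le X → le Y
  ge_summand : ∀ X Y : C, ge (X ⊞ Y) → ge X
  le_summand : ∀ X Y : C, le (X ⊞ Y) → le X
  ge_shift : ∀ X : C, ge X → ge (X⟦(-1 : ℤ)⟧)
  le_shift : ∀ X : C, le X → le (X⟦(1 : ℤ)⟧)
  hom_zero : ∀ A B : C, ge A → le B → ∀ f : A ⟶ B⟦(1 : ℤ)⟧, f = 0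
  exists_triangle : ∀ X : C, ∃ (A B : C) (f : A ⟶ X) (g : X ⟶ B) (h : B ⟶ A⟦(1 : ℤ)⟧),
    (Triangle.mk f g h ∈ distTriang C) ∧ ge A ∧ le (B⟦(-1 : ℤ)⟧)

namespace CoTStructure

variable {C : Type*} [Category C] [Preadditive C] [HasZeroObject C] [HasShift C ℤ]
    [∀ n : ℤ, (shiftFunctor C n).Additive] [Pretriangulated C]

/-- shift addition iso -/
noncomputable def shAdd (X : C) (a b : ℤ) : X⟦a⟧⟦b⟧ ≅ X⟦a + b⟧ :=
  ((shiftFunctorAdd C a b).app X).symm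

/-- equal shifts iso -/
def shEq (X : C) {a b : ℤ} (h : a = b) : X⟦a⟧ ≅ X⟦b⟧ :=
  eqToIso (by rw [h])

/-- cancelling shifts iso -/
noncomputable def shCancel (X : C) (a b : ℤ) (h : a + b = 0) : X⟦a⟧⟦b⟧ ≅ X :=
  (shiftFunctorCompIsoId C a b h).app X

variable (t : CoTStructure C)

lemma ge_congr {X : C} {a b : ℤ} (h : a = b) (hX : t.ge (X⟦a⟧)) : t.ge (X⟦b⟧) := by
  subst h; exact hX

lemma le_congr {X : C} {a b : ℤ} (h : a = b) (hX : t.le (X⟦a⟧)) : t.le (X⟦b⟧) := by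
  subst h; exact hX

lemma ge_sub_nat {X : C} (a : ℤ) (hX : t.ge (X⟦a⟧)) (k : ℕ) : t.ge (X⟦a - (k : ℤ)⟧) := by
  induction k with
  | zero => exact t.ge_congr (by simp) hX
  | succ k ih =>
      have h1 : t.ge ((X⟦a - (k : ℤ)⟧)⟦(-1 : ℤ)⟧) := t.ge_shift _ ih
      have h2 : t.ge (X⟦a - (k : ℤ) + (-1)⟧) := t.ge_iso (shAdd X _ _) h1
      exact t.ge_congr (by push_cast; ring) h2

lemma le_add_nat {X : C} (a : ℤ) (hX : t.le (X⟦a⟧)) (k : ℕ) : t.le (X⟦a + (k : ℤ)⟧) := by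
  induction k with
  | zero => exact t.le_congr (by simp) hX
  | succ k ih =>
      have h1 : t.le ((X⟦a + (k : ℤ)⟧)⟦(1 : ℤ)⟧) := t.le_shift _ ih
      have h2 : t.le (X⟦a + (k : ℤ) + 1⟧) := t.le_iso (shAdd X _ _) h1
      exact t.le_congr (by push_cast; ring) h2

lemma ge_mono {X : C} {a b : ℤ} (h : b ≤ a) (hX : t.ge (X⟦a⟧)) : t.ge (X⟦b⟧) := by
  have := t.ge_sub_nat a hX (a - b).toNat
  exact t.ge_congr (by rw [Int.toNat_of_nonneg (by omega)]; ring) this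

lemma le_mono {X : C} {a b : ℤ} (h : a ≤ b) (hX : t.le (X⟦a⟧)) : t.le (X⟦b⟧) := by
  have := t.le_add_nat a hX (b - a).toNat
  exact t.le_congr (by rw [Int.toNat_of_nonneg (by omega)]; ring) this

lemma ge_obj_neg_nat {X : C} (hX : t.ge X) (k : ℕ) : t.ge (X⟦-(k : ℤ)⟧) := by
  have h0 : t.ge (X⟦(0 : ℤ)⟧) := t.ge_iso ((shiftFunctorZero C ℤ).app X).symm hX
  exact t.ge_mono (by omega) h0

lemma le_obj_nat {X : C} (hX : t.le X) (k : ℕ) : t.le (X⟦(k : ℤ)⟧) := by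
  have h0 : t.le (X⟦(0 : ℤ)⟧) := t.le_iso ((shiftFunctorZero C ℤ).app X).symm hX
  exact t.le_mono (by omega) h0

lemma ge_zero {Y : C} (hY : IsZero Y) : t.ge Y := by
  obtain ⟨A, B, f, g, h, _, hA, _⟩ := t.exists_triangle Y
  have e : A ≅ Y ⊞ A := by
    refine ⟨biprod.inr, biprod.snd, by simp, ?_⟩
    apply biprod.hom_ext
    · exact hY.eq_of_tgt _ _
    · simp
  exact t.ge_summand Y A (t.ge_iso e hA)

lemma le_zero {Y : C} (hY : IsZero Y) : t.le Y := by
  obtain ⟨A, B, f, g, h, _, _, hB⟩ := t.exists_triangle Y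
  have e : B⟦(-1 : ℤ)⟧ ≅ Y ⊞ B⟦(-1 : ℤ)⟧ := by
    refine ⟨biprod.inr, biprod.snd, by simp, ?_⟩
    apply biprod.hom_ext
    · exact hY.eq_of_tgt _ _
    · simp
  exact t.le_summand Y _ (t.le_iso e hB)

/-- orthogonality in the form `Hom(A, B) = 0` when `ge A` and `le (B⟦-1⟧)`. -/
lemma hom_zero' {A B : C} (hA : t.ge A) (hB : t.le (B⟦(-1 : ℤ)⟧)) (f : A ⟶ B) : f = 0 := by
  have e : B⟦(-1 : ℤ)⟧⟦(1 : ℤ)⟧ ≅ B := shCancel B (-1) 1 (by ring)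
  have h0 : f ≫ e.inv = 0 := t.hom_zero A (B⟦(-1 : ℤ)⟧) hA hB (f ≫ e.inv)
  calc f = (f ≫ e.inv) ≫ e.hom := by simp
    _ = 0 := by rw [h0, Limits.zero_comp]

/-- extension closure of `ge`. -/
lemma ext_ge (T : Triangle C) (hT : T ∈ distTriang C) (h₁ : t.ge T.obj₁)
    (h₃ : t.ge T.obj₃) : t.ge T.obj₂ := by
  obtain ⟨A, B, f, g, h, hdist, hA, hB⟩ := t.exists_triangle T.obj₂
  have hg : g = 0 := by
    have h1 : T.mor₁ ≫ g = 0 := t.hom_zero' h₁ hB _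
    obtain ⟨u, hu⟩ := Triangle.yoneda_exact₂ T hT g h1
    rw [hu, t.hom_zero' h₃ hB u, Limits.comp_zero]
  subst hg
  have hd2 : (Triangle.mk f (0 : T.obj₂ ⟶ B) h).rotate.rotate ∈ distTriang C :=
    rot_of_distTriang _ (rot_of_distTriang _ hdist)
  obtain ⟨e, -, -⟩ := exists_iso_binaryBiproduct_of_distTriang _ hd2
    (by change -(shiftFunctor C (1 : ℤ)).map (0 : T.obj₂ ⟶ B) = 0; rw [Functor.map_zero, neg_zero])
  -- e : A⟦1⟧ ≅ B ⊞ T.obj₂⟦1⟧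
  haveI := preservesBinaryBiproducts_of_preservesBiproducts (shiftFunctor C (-1 : ℤ))
  have e1 : t.ge (A⟦(1 : ℤ)⟧⟦(-1 : ℤ)⟧) := t.ge_iso (shCancel A 1 (-1) (by ring)).symm hA
  have e2 : t.ge ((B ⊞ (T.obj₂⟦(1 : ℤ)⟧))⟦(-1 : ℤ)⟧) :=
    t.ge_iso ((shiftFunctor C (-1 : ℤ)).mapIso e) e1
  have e3 : t.ge ((B⟦(-1 : ℤ)⟧) ⊞ (T.obj₂⟦(1 : ℤ)⟧⟦(-1 : ℤ)⟧)) :=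
    t.ge_iso ((shiftFunctor C (-1 : ℤ)).mapBiprod _ _) e2
  have e4 : t.ge ((T.obj₂⟦(1 : ℤ)⟧⟦(-1 : ℤ)⟧) ⊞ (B⟦(-1 : ℤ)⟧)) :=
    t.ge_iso (biprod.braiding _ _) e3
  exact t.ge_iso (shCancel T.obj₂ 1 (-1) (by ring)) (t.ge_summand _ _ e4)

/-- extension closure of `le`. -/
lemma ext_le (T : Triangle C) (hT : T ∈ distTriang C) (h₁ : t.le T.obj₁)
    (h₃ : t.le T.obj₃) : t.le T.obj₂ := by
  obtain ⟨A, B, a, b, c, hdist, hA, hB⟩ := t.exists_triangle (T.obj₂⟦(1 : ℤ)⟧)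
  have ha : a = 0 := by
    have h1 : a ≫ T.rotate.rotate.rotate.mor₂ = 0 := by
      change a ≫ (-(shiftFunctor C (1 : ℤ)).map T.mor₂) = 0
      rw [Preadditive.comp_neg]
      have : a ≫ (shiftFunctor C (1 : ℤ)).map T.mor₂ = 0 := t.hom_zero _ _ hA h₃ _
      rw [this, neg_zero]
    obtain ⟨u, hu⟩ := Triangle.coyoneda_exact₂ _
      (rot_of_distTriang _ (rot_of_distTriang _ (rot_of_distTriang _ hT))) a h1
    have hu0 : u = 0 := t.hom_zero _ _ hA h₁ u
    rw [hu, hu0, Limits.zero_comp]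
    rfl
  subst ha
  have hd1 : (Triangle.mk (0 : A ⟶ T.obj₂⟦(1 : ℤ)⟧) b c).rotate ∈ distTriang C :=
    rot_of_distTriang _ hdist
  obtain ⟨e, -, -⟩ := exists_iso_binaryBiproduct_of_distTriang _ hd1
    (by change -(shiftFunctor C (1 : ℤ)).map (0 : A ⟶ T.obj₂⟦(1 : ℤ)⟧) = 0; rw [Functor.map_zero, neg_zero])
  -- e : B ≅ T.obj₂⟦1⟧ ⊞ A⟦1⟧
  haveI := preservesBinaryBiproducts_of_preservesBiproducts (shiftFunctor C (-1 : ℤ))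
  have e2 : t.le (((T.obj₂⟦(1 : ℤ)⟧) ⊞ (A⟦(1 : ℤ)⟧))⟦(-1 : ℤ)⟧) :=
    t.le_iso ((shiftFunctor C (-1 : ℤ)).mapIso e) hB
  have e3 : t.le ((T.obj₂⟦(1 : ℤ)⟧⟦(-1 : ℤ)⟧) ⊞ (A⟦(1 : ℤ)⟧⟦(-1 : ℤ)⟧)) :=
    t.le_iso ((shiftFunctor C (-1 : ℤ)).mapBiprod _ _) e2
  exact t.le_iso (shCancel T.obj₂ 1 (-1) (by ring)) (t.le_summand _ _ e3)

lemma main_ge (n : ℕ) : ∀ (X : C), t.ge X → t.le (X⟦(n : ℤ)⟧) →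
    ∀ (P : C → Prop)
      (hiso : ∀ {Y Z : C}, (Y ≅ Z) → P Y → P Z)
      (hext : ∀ T : Triangle C, (T ∈ distTriang C) → P T.obj₁ → P T.obj₃ → P T.obj₂)
      (hgen : ∀ Y : C, t.ge Y → t.le Y → ∀ k : ℕ, P (Y⟦-(k : ℤ)⟧)),
      ∀ k : ℕ, P (X⟦-(k : ℤ)⟧) := by
  induction n with
  | zero =>
      intro X hg hl P hiso hext hgen k
      exact hgen X hg (t.le_iso ((shiftFunctorZero C ℤ).app X) (t.le_congr (by simp) hl)) k
  | succ n ih =>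
      intro X hg hl P hiso hext hgen k
      obtain ⟨A, B, a, b, c, hdist, hA, hB⟩ := t.exists_triangle (X⟦(1 : ℤ)⟧)
      -- `B⟦-1⟧` is in the coheart
      have hs_ge : t.ge (B⟦(-1 : ℤ)⟧) := by
        have hd := inv_rot_of_distTriang _ (inv_rot_of_distTriang _ hdist)
        exact t.ext_ge _ hd (t.ge_iso (shCancel X 1 (-1) (by ring)).symm hg) hA
      -- `A` satisfies `le (A⟦n⟧)`
      have hA_le : t.le (A⟦(n : ℤ)⟧) := by
        have hd := Triangle.shift_distinguished _ (inv_rot_of_distTriang _ hdist) (n : ℤ)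
        refine t.ext_le _ hd ?_ ?_
        · exact t.le_obj_nat hB n
        · have hl' : t.le (X⟦(1 : ℤ) + (n : ℤ)⟧) :=
            t.le_congr (show (((n + 1 : ℕ)) : ℤ) = 1 + (n : ℤ) by push_cast; ring) hl
          exact t.le_iso (shAdd X 1 (n : ℤ)).symm hl'
      have hPA := ih A hA hA_le P @hiso hext hgen
      have hd := Triangle.shift_distinguished _ hdist (-(k : ℤ) - 1)
      have h1 : P (A⟦(-(k : ℤ) - 1)⟧) :=
        hiso (shEq A (by push_cast; ring)) (hPA (k + 1))
      have h3 : P (B⟦(-(k : ℤ) - 1)⟧) :=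
        hiso (shAdd B (-1) (-(k : ℤ)) ≪≫ shEq B (by ring)) (hgen (B⟦(-1 : ℤ)⟧) hs_ge hB k)
      have h2 : P ((X⟦(1 : ℤ)⟧)⟦(-(k : ℤ) - 1)⟧) := hext _ hd h1 h3
      exact hiso (shAdd X 1 (-(k : ℤ) - 1) ≪≫ shEq X (by ring)) h2

lemma main_le (n : ℕ) : ∀ (X : C), t.le X → t.ge (X⟦(-(n : ℕ) : ℤ)⟧) →
    ∀ (P : C → Prop)
      (hiso : ∀ {Y Z : C}, (Y ≅ Z) → P Y → P Z)
      (hext : ∀ T : Triangle C, (T ∈ distTriang C) → P T.obj₁ → P T.obj₃ → P T.obj₂)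
      (hgen : ∀ Y : C, t.ge Y → t.le Y → ∀ k : ℕ, P (Y⟦(k : ℤ)⟧)),
      ∀ k : ℕ, P (X⟦(k : ℤ)⟧) := by
  induction n with
  | zero =>
      intro X hl hg P hiso hext hgen k
      exact hgen X (t.ge_iso ((shiftFunctorZero C ℤ).app X) (t.ge_congr (by simp) hg)) hl k
  | succ n ih =>
      intro X hl hg P hiso hext hgen k
      obtain ⟨A, B, a, b, c, hdist, hA, hB⟩ := t.exists_triangle X
      -- `A` is in the coheart
      have hA_le : t.le A :=
        t.ext_le _ (inv_rot_of_distTriang _ hdist) hB hl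
      -- `B⟦-1⟧` satisfies `ge ((B⟦-1⟧)⟦-n⟧)`
      have hB_ge : t.ge ((B⟦(-1 : ℤ)⟧)⟦(-(n : ℕ) : ℤ)⟧) := by
        have hd := Triangle.shift_distinguished _ (rot_of_distTriang _ hdist) (-(n : ℤ) - 1)
        have h1 : t.ge (X⟦(-(n : ℤ) - 1)⟧) := t.ge_congr (by push_cast; ring) hg
        have h3 : t.ge ((A⟦(1 : ℤ)⟧)⟦(-(n : ℤ) - 1)⟧) :=
          t.ge_iso (shEq A (show -(n : ℤ) = 1 + (-(n : ℤ) - 1) by ring) ≪≫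
            (shAdd A 1 (-(n : ℤ) - 1)).symm) (t.ge_obj_neg_nat hA n)
        have h2 : t.ge (B⟦(-(n : ℤ) - 1)⟧) := t.ext_ge _ hd h1 h3
        exact t.ge_iso ((shAdd B (-1) (-(n : ℤ)) ≪≫ shEq B (by ring)).symm) h2
      have hPB := ih (B⟦(-1 : ℤ)⟧) hB hB_ge P @hiso hext hgen
      have hd := Triangle.shift_distinguished _ hdist (k : ℤ)
      have h1 : P (A⟦(k : ℤ)⟧) := hgen A hA hA_le k
      have h3 : P (B⟦(k : ℤ)⟧) :=
        hiso (shAdd B (-1) (((k + 1 : ℕ)) : ℤ) ≪≫ shEq B (by push_cast; ring)) (hPB (k + 1))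
      exact hext _ hd h1 h3

end CoTStructure

open CoTStructure in
/-- For a bounded co-`t`-structure with coheart `S`, the class `D_{≥0}` is exactly the
smallest full additive subcategory containing all `S[-k]` for `k ≥ 0` and closed under
extensions and direct summands, and `D_{≤0}` is exactly the smallest such subcategory
containing all `S[k]` for `k ≥ 0`. -/
theorem coTStructure_determined_by_coheart
    {C : Type*} [Category C] [Preadditive C] [HasZeroObject C] [HasShift C ℤ]
    [∀ n : ℤ, (shiftFunctor C n).Additive] [Pretriangulated C]
    (t : CoTStructure C)
    (hbdd₁ : ∀ X : C, ∃ n : ℤ, t.ge (X⟦n⟧))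
    (hbdd₂ : ∀ X : C, ∃ n : ℤ, t.le (X⟦n⟧)) :
    (∀ X : C, t.ge X ↔
      (∀ P : C → Prop,
        (∀ {Y Z : C}, (Y ≅ Z) → P Y → P Z) →
        (∀ Y : C, IsZero Y → P Y) →
        (∀ T : Triangle C, (T ∈ distTriang C) → P T.obj₁ → P T.obj₃ → P T.obj₂) →
        (∀ Y Z : C, P (Y ⊞ Z) → P Y) →
        (∀ Y : C, t.ge Y → t.le Y → ∀ k : ℕ, P (Y⟦-(k : ℤ)⟧)) →
        P X)) ∧
    (∀ X : C, t.le X ↔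
      (∀ P : C → Prop,
        (∀ {Y Z : C}, (Y ≅ Z) → P Y → P Z) →
        (∀ Y : C, IsZero Y → P Y) →
        (∀ T : Triangle C, (T ∈ distTriang C) → P T.obj₁ → P T.obj₃ → P T.obj₂) →
        (∀ Y Z : C, P (Y ⊞ Z) → P Y) →
        (∀ Y : C, t.ge Y → t.le Y → ∀ k : ℕ, P (Y⟦(k : ℤ)⟧)) →
        P X)) := by
  constructor
  · intro X
    constructor
    · intro hX P hiso hzero hext hsum hgen
      obtain ⟨m, hm⟩ := hbdd₂ X
      have hm' : t.le (X⟦((m.toNat : ℕ) : ℤ)⟧) := t.le_mono (Int.self_le_toNat m) hm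
      have h0 := t.main_ge m.toNat X hX hm' P @hiso hext hgen 0
      exact hiso (shEq X (by simp) ≪≫ (shiftFunctorZero C ℤ).app X) h0
    · intro h
      exact h t.ge (fun {Y Z} e => t.ge_iso e) (fun Y hY => t.ge_zero hY)
        (fun T hT => t.ext_ge T hT) t.ge_summand
        (fun Y hgY _ k => t.ge_obj_neg_nat hgY k)
  · intro X
    constructor
    · intro hX P hiso hzero hext hsum hgen
      obtain ⟨m, hm⟩ := hbdd₁ X
      have hm' : t.ge (X⟦(-(((-m).toNat : ℕ)) : ℤ)⟧) :=
        t.ge_mono (by have := Int.self_le_toNat (-m); omega) hm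
      have h0 := t.main_le (-m).toNat X hX hm' P @hiso hext hgen 0
      exact hiso (shEq X (by simp) ≪≫ (shiftFunctorZero C ℤ).app X) h0
    · intro h
      exact h t.le (fun {Y Z} e => t.le_iso e) (fun Y hY => t.le_zero hY)
        (fun T hT => t.ext_le T hT) t.le_summand
        (fun Y _ hlY k => t.le_obj_nat hlY k)
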